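/- arXiv:1301.2069 — 2 statements merged into one kernel-verified Lean document; each statement's English description precedes it below -/
import Mathlib

section
/- Let $n \ge 1$, let $\lambda_1, \dots, \lambda_n$ be strictly positive real numbers with $m = \sum_{i=1}^n \lambda_i$, let $X = (X_{ik})$ be an $n \times n$ complex matrix with trace $1$, and let $K \ge 0$ be a real number such that $K^2 \ge m \sum_{i=1}^n |X_{ii}|^2 \lambda_i^{-1}$ and $K^2 \ge m \sum_{i=1}^n |X_{ii}|^2 \lambda_i$. Then $m \le K^2 \cdot n$. -/
open scoped BigOperators

/-- Arithmetic core of the main theorem: if `m = ∑ λ i` with `λ i > 0`,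
`X` is an `n × n` complex matrix of trace `1`, and `K ≥ 0` satisfies
`K² ≥ m ∑ᵢ |Xᵢᵢ|² λᵢ⁻¹` and `K² ≥ m ∑ᵢ |Xᵢᵢ|² λᵢ`, then `m ≤ K² n`. -/
theorem quantum_dim_le (n : ℕ) (hn : 1 ≤ n) (lam : Fin n → ℝ)
    (hlam : ∀ i, 0 < lam i) (m : ℝ) (hm : m = ∑ i, lam i)
    (X : Matrix (Fin n) (Fin n) ℂ) (hX : X.trace = 1)
    (K : ℝ) (hK : 0 ≤ K)
    (h1 : m * ∑ i, ‖X i i‖ ^ 2 * (lam i)⁻¹ ≤ K ^ 2)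
    (h2 : m * ∑ i, ‖X i i‖ ^ 2 * lam i ≤ K ^ 2) :
    m ≤ K ^ 2 * n := by
  have hm0 : 0 < m := by
    rw [hm]
    exact Finset.sum_pos (fun i _ => hlam i) (Finset.univ_nonempty_iff.2 ⟨⟨0, hn⟩⟩)
  set S : ℝ := ∑ i, ‖X i i‖ ^ 2 with hS
  -- Cauchy–Schwarz: 1 ≤ n * S
  have htr : (1 : ℝ) ≤ ∑ i, ‖X i i‖ := by
    calc (1 : ℝ) = ‖X.trace‖ := by rw [hX]; simp
    _ = ‖∑ i, X i i‖ := by rw [Matrix.trace]; rfl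
    _ ≤ ∑ i, ‖X i i‖ := norm_sum_le _ _
  have hcs : (1 : ℝ) ≤ n * S := by
    have := sq_sum_le_card_mul_sum_sq (s := Finset.univ) (f := fun i => ‖X i i‖)
    simp only [Finset.card_univ, Fintype.card_fin] at this
    calc (1 : ℝ) ≤ (∑ i, ‖X i i‖) ^ 2 := by nlinarith
    _ ≤ n * S := this
  -- λ + λ⁻¹ ≥ 2, averaging
  have hav : m * S ≤ K ^ 2 := by
    have key : 2 * (m * S) ≤ 2 * K ^ 2 := by
      have : ∑ i, (2 * ‖X i i‖ ^ 2) ≤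
          (∑ i, ‖X i i‖ ^ 2 * (lam i)⁻¹) + ∑ i, ‖X i i‖ ^ 2 * lam i := by
        rw [← Finset.sum_add_distrib]
        apply Finset.sum_le_sum
        intro i _
        have h := hlam i
        have h2' : 2 ≤ (lam i)⁻¹ + lam i := by
          nlinarith [sq_nonneg (lam i - 1), mul_inv_cancel₀ (ne_of_gt h),
            inv_pos.2 h, mul_pos h (inv_pos.2 h)]
        nlinarith [sq_nonneg (‖X i i‖)]
      have : m * ∑ i, (2 * ‖X i i‖ ^ 2) ≤ 2 * K ^ 2 := by
        calc m * ∑ i, (2 * ‖X i i‖ ^ 2)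
            ≤ m * ((∑ i, ‖X i i‖ ^ 2 * (lam i)⁻¹) + ∑ i, ‖X i i‖ ^ 2 * lam i) :=
              mul_le_mul_of_nonneg_left this hm0.le
          _ ≤ 2 * K ^ 2 := by rw [mul_add]; linarith
      rw [← Finset.mul_sum] at this
      linarith
    linarith
  have hSn : m * 1 ≤ m * (n * S) := mul_le_mul_of_nonneg_left hcs hm0.le
  calc m = m * 1 := (mul_one m).symm
  _ ≤ m * (n * S) := hSn
  _ = (m * S) * n := by ring
  _ ≤ K ^ 2 * n := mul_le_mul_of_nonneg_right hav (Nat.cast_nonneg n)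
end

section
/- Let $n \ge 1$, let $\lambda_1, \dots, \lambda_n$ be strictly positive real numbers with $\sum_{i=1}^n \lambda_i = \sum_{i=1}^n \lambda_i^{-1} = m$, let $X = (X_{ik})$ be an $n \times n$ complex matrix with trace $1$, let $K \ge 0$ satisfy $K^2 \ge m \sum_{i=1}^n |X_{ii}|^2 \lambda_i^{-1}$ and $K^2 \ge m \sum_{i=1}^n |X_{ii}|^2 \lambda_i$, and suppose moreover that $m^d \le K^2 n^d$ for every positive integer $d$. Then $\lambda_i = 1$ for every $i$. -/
open scoped BigOperators

/-- Complete arithmetic skeleton of the main theorem: suppose `λ i > 0`,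
`∑ λ i = ∑ (λ i)⁻¹ = m`, `X` is an `n × n` complex matrix of trace `1`,
`K ≥ 0` satisfies `K² ≥ m ∑ᵢ |Xᵢᵢ|² λᵢ⁻¹`, `K² ≥ m ∑ᵢ |Xᵢᵢ|² λᵢ`, and
`m^d ≤ K² n^d` for every positive integer `d`. Then every `λ i = 1`. -/
theorem kac_from_biflat_estimates (n : ℕ) (hn : 1 ≤ n) (lam : Fin n → ℝ)
    (hlam : ∀ i, 0 < lam i) (m : ℝ)
    (hm : ∑ i, lam i = m) (hm' : ∑ i, (lam i)⁻¹ = m)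
    (X : Matrix (Fin n) (Fin n) ℂ) (hX : X.trace = 1)
    (K : ℝ) (hK : 0 ≤ K)
    (h1 : m * ∑ i, ‖X i i‖ ^ 2 * (lam i)⁻¹ ≤ K ^ 2)
    (h2 : m * ∑ i, ‖X i i‖ ^ 2 * lam i ≤ K ^ 2)
    (hpow : ∀ d : ℕ, 0 < d → m ^ d ≤ K ^ 2 * (n : ℝ) ^ d) :
    ∀ i, lam i = 1 := by
  have hn0 : (0:ℝ) < n := by exact_mod_cast hn
  -- each λ + λ⁻¹ ≥ 2
  have hterm : ∀ i : Fin n, (2:ℝ) ≤ lam i + (lam i)⁻¹ := by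
    intro i
    have h := hlam i
    nlinarith [sq_nonneg (lam i - 1), mul_pos h (inv_pos.mpr h),
      mul_inv_cancel₀ (ne_of_gt h)]
  -- m ≥ n
  have hmn : (n:ℝ) ≤ m := by
    have hsum : 2 * m = ∑ i, (lam i + (lam i)⁻¹) := by
      rw [Finset.sum_add_distrib, hm, hm']; ring
    have : ∑ i : Fin n, (2:ℝ) ≤ ∑ i, (lam i + (lam i)⁻¹) :=
      Finset.sum_le_sum fun i _ => hterm i
    simp [Finset.sum_const] at this
    linarith [hsum ▸ this]
  -- m ≤ n from the power estimate
  have hmn' : m ≤ (n:ℝ) := by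
    by_contra h
    push_neg at h
    have h1' : 1 < m / n := (one_lt_div hn0).mpr h
    obtain ⟨d, hd⟩ := pow_unbounded_of_one_lt (K ^ 2) h1'
    have hd0 : 0 < d := by
      rcases Nat.eq_zero_or_pos d with rfl | h'
      · rw [pow_zero] at hd
        have := hpow 1 one_pos
        rw [pow_one, pow_one] at this
        nlinarith
      · exact h'
    have := hpow d hd0
    have hnd : (0:ℝ) < (n:ℝ) ^ d := pow_pos hn0 d
    have : (m / n) ^ d ≤ K ^ 2 := by
      rw [div_pow, div_le_iff₀ hnd]
      exact this
    linarith
  have hmeq : m = (n:ℝ) := le_antisymm hmn' hmn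
  -- equality in the sum forces each term = 2
  have hsum2 : ∑ i, (lam i + (lam i)⁻¹) = ∑ i : Fin n, (2:ℝ) := by
    rw [Finset.sum_add_distrib, hm, hm']
    simp [hmeq]; ring
  have heq : ∀ i ∈ Finset.univ, lam i + (lam i)⁻¹ = 2 := by
    intro i hi
    have h := (Finset.sum_eq_sum_iff_of_le (fun i _ => hterm i)).mp hsum2.symm i hi
    linarith [h]
  intro i
  have h := heq i (Finset.mem_univ i)
  have hp := hlam i
  have : lam i * (lam i + (lam i)⁻¹) = lam i * 2 := by rw [h]
  have hinv : lam i * (lam i)⁻¹ = 1 := mul_inv_cancel₀ (ne_of_gt hp)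
  nlinarith [sq_nonneg (lam i - 1)]
end
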